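/- arXiv:1407.5740 — 4 statements merged into one kernel-verified Lean document; each statement's English description precedes it below -/
import Mathlib

section
/- Let ρ, W, Ũ : [ε, T) → ℝ be C¹ solutions of ρ' = (c_l - 2)ρ/Ũ, W' = (c_l - 2)ρ/Ũ² - W/Ũ, (Ũ(ξ)/ξ)' = W(ξ)/ξ with c_l > 2, ε > 0, and initial data satisfying Ũ(ε) > 0, W(ε) > 0, ρ(ε) > 0. Then W(ξ) > 0 and ρ(ξ) > 0 for all ξ ∈ [ε, T). -/
/-- For C¹ solutions of the extended self-similar ODE system on [ε, T) with
positive initial data, W and ρ stay positive on [ε, T). -/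
theorem stmt6 (cl ε T : ℝ) (hcl : 2 < cl) (hε : 0 < ε) (hεT : ε < T)
    (ρ W Yu : ℝ → ℝ) (ρ' W' : ℝ → ℝ)
    (hρC1 : ContinuousOn ρ' (Set.Ico ε T)) (hWC1 : ContinuousOn W' (Set.Ico ε T))
    (hYune : ∀ ξ ∈ Set.Ico ε T, Yu ξ ≠ 0)
    (hρ : ∀ ξ ∈ Set.Ico ε T, HasDerivAt ρ (ρ' ξ) ξ ∧ ρ' ξ = (cl - 2) * ρ ξ / Yu ξ)
    (hW : ∀ ξ ∈ Set.Ico ε T, HasDerivAt W (W' ξ) ξ ∧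
      W' ξ = (cl - 2) * ρ ξ / (Yu ξ) ^ 2 - W ξ / Yu ξ)
    (hU : ∀ ξ ∈ Set.Ico ε T, HasDerivAt (fun x => Yu x / x) (W ξ / ξ) ξ)
    (hU0 : 0 < Yu ε) (hW0 : 0 < W ε) (hρ0 : 0 < ρ ε) :
    ∀ ξ ∈ Set.Ico ε T, 0 < W ξ ∧ 0 < ρ ξ := by
  -- Yu is continuous on [ε, T)
  have hYuc : ContinuousOn Yu (Set.Ico ε T) := by
    intro x hx
    have hxne : x ≠ 0 := ne_of_gt (lt_of_lt_of_le hε hx.1)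
    have h1 : ContinuousAt (fun y => Yu y / y) x := (hU x hx).continuousAt
    have h2 : ContinuousAt (fun y => (Yu y / y) * y) x := h1.mul continuousAt_id
    have heq : (fun y => (Yu y / y) * y) =ᶠ[nhds x] Yu := by
      filter_upwards [eventually_ne_nhds hxne] with y hy
      field_simp
    exact (h2.congr heq).continuousWithinAt
  -- Yu stays positive on [ε, T)
  have hYupos : ∀ ξ ∈ Set.Ico ε T, 0 < Yu ξ := by
    intro b hb
    by_contra h
    push_neg at h
    have hblt : Yu b < 0 := lt_of_le_of_ne h (hYune b hb)
    have hsub : Set.Icc ε b ⊆ Set.Ico ε T := fun x hx => ⟨hx.1, lt_of_le_of_lt hx.2 hb.2⟩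
    have hIVT := intermediate_value_Icc' hb.1 (hYuc.mono hsub)
    have h0 : (0:ℝ) ∈ Set.Icc (Yu b) (Yu ε) := ⟨le_of_lt hblt, le_of_lt hU0⟩
    obtain ⟨c, hc, hc0⟩ := hIVT h0
    exact hYune c (hsub hc) hc0
  by_contra hcon
  push_neg at hcon
  set S : Set ℝ := {ξ | ξ ∈ Set.Ico ε T ∧ ¬ (0 < W ξ ∧ 0 < ρ ξ)} with hSdef
  have hSne : S.Nonempty := by
    obtain ⟨x, hx, hx2⟩ := hcon
    exact ⟨x, hx, fun hpos => (hx2 hpos.1) |>.not_gt hpos.2⟩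
  have hbdd : BddBelow S := ⟨ε, fun x hx => hx.1.1⟩
  set ξ₀ := sInf S with hξ₀def
  have hξ₀ge : ε ≤ ξ₀ := le_csInf hSne (fun x hx => hx.1.1)
  have hξ₀lt : ξ₀ < T := by
    obtain ⟨x, hx⟩ := hSne
    exact lt_of_le_of_lt (csInf_le hbdd hx) hx.1.2
  have hξ₀mem : ξ₀ ∈ Set.Ico ε T := ⟨hξ₀ge, hξ₀lt⟩
  -- W and ρ positive strictly before ξ₀
  have hpos : ∀ ξ ∈ Set.Ico ε ξ₀, 0 < W ξ ∧ 0 < ρ ξ := by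
    intro ξ hξ
    by_contra h
    have hmem : ξ ∈ S := ⟨⟨hξ.1, lt_trans hξ.2 hξ₀lt⟩, h⟩
    exact absurd (csInf_le hbdd hmem) (not_le.mpr hξ.2)
  -- at ξ₀ not both positive
  have hnot : ¬ (0 < W ξ₀ ∧ 0 < ρ ξ₀) := by
    rintro ⟨hw, hr⟩
    have hWc : ContinuousAt W ξ₀ := (hW ξ₀ hξ₀mem).1.continuousAt
    have hρc : ContinuousAt ρ ξ₀ := (hρ ξ₀ hξ₀mem).1.continuousAt
    have hev : ∀ᶠ y in nhds ξ₀, 0 < W y ∧ 0 < ρ y :=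
      (hWc.eventually (eventually_gt_nhds hw)).and (hρc.eventually (eventually_gt_nhds hr))
    rw [Metric.eventually_nhds_iff] at hev
    obtain ⟨δ, hδ, hball⟩ := hev
    obtain ⟨x, hxS, hxlt⟩ := Real.lt_sInf_add_pos hSne hδ
    have hxge : ξ₀ ≤ x := csInf_le hbdd hxS
    have hdist : dist x ξ₀ < δ := by
      rw [Real.dist_eq, abs_of_nonneg (by linarith)]
      linarith
    exact hxS.2 (hball hdist)
  -- hence ε < ξ₀
  have hεlt : ε < ξ₀ := by
    rcases lt_or_eq_of_le hξ₀ge with h | h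
    · exact h
    · exact absurd (h ▸ ⟨hW0, hρ0⟩) hnot
  -- ρ is strictly increasing on [ε, ξ₀], so ρ ξ₀ > 0
  have hIccsub : Set.Icc ε ξ₀ ⊆ Set.Ico ε T := fun x hx => ⟨hx.1, lt_of_le_of_lt hx.2 hξ₀lt⟩
  have hρmono : StrictMonoOn ρ (Set.Icc ε ξ₀) := by
    apply strictMonoOn_of_deriv_pos (convex_Icc ε ξ₀)
    · intro x hx
      exact (hρ x (hIccsub hx)).1.continuousAt.continuousWithinAt
    · intro x hx
      rw [interior_Icc] at hx
      have hxI : x ∈ Set.Ico ε T := hIccsub ⟨le_of_lt hx.1, le_of_lt hx.2⟩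
      rw [(hρ x hxI).1.deriv, (hρ x hxI).2]
      exact div_pos (mul_pos (by linarith) (hpos x ⟨le_of_lt hx.1, hx.2⟩).2) (hYupos x hxI)
  have hρξ₀ : 0 < ρ ξ₀ :=
    lt_trans hρ0 (hρmono (Set.left_mem_Icc.mpr (le_of_lt hεlt))
      (Set.right_mem_Icc.mpr (le_of_lt hεlt)) hεlt)
  have hWξ₀ : W ξ₀ ≤ 0 := by
    by_contra h
    exact hnot ⟨lt_of_not_ge h, hρξ₀⟩
  -- W' ξ₀ > 0
  have hW'pos : 0 < W' ξ₀ := by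
    rw [(hW ξ₀ hξ₀mem).2]
    have h1 : 0 < (cl - 2) * ρ ξ₀ / (Yu ξ₀) ^ 2 :=
      div_pos (mul_pos (by linarith) hρξ₀) (pow_pos (hYupos ξ₀ hξ₀mem) 2)
    have h2 : W ξ₀ / Yu ξ₀ ≤ 0 := div_nonpos_of_nonpos_of_nonneg hWξ₀ (le_of_lt (hYupos ξ₀ hξ₀mem))
    linarith
  -- derivative positive at ξ₀ forces W < W ξ₀ ≤ 0 just left of ξ₀, contradiction
  have hslope : Filter.Tendsto (slope W ξ₀) (nhdsWithin ξ₀ {ξ₀}ᶜ) (nhds (W' ξ₀)) :=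
    hasDerivAt_iff_tendsto_slope.mp (hW ξ₀ hξ₀mem).1
  have hev1 : ∀ᶠ y in nhdsWithin ξ₀ (Set.Iio ξ₀), 0 < slope W ξ₀ y := by
    have h := hslope.eventually (eventually_gt_nhds hW'pos)
    have hle : nhdsWithin ξ₀ (Set.Iio ξ₀) ≤ nhdsWithin ξ₀ {ξ₀}ᶜ :=
      nhdsWithin_mono ξ₀ (fun y (hy : y ∈ Set.Iio ξ₀) => (ne_of_lt hy : y ≠ ξ₀))
    exact hle h
  have hev2 : ∀ᶠ y in nhdsWithin ξ₀ (Set.Iio ξ₀), y ∈ Set.Ioo ε ξ₀ :=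
    Ioo_mem_nhdsLT_of_mem ⟨hεlt, le_refl ξ₀⟩
  obtain ⟨y, hy1, hy2⟩ := (hev1.and hev2).exists
  have hyW : 0 < W y := (hpos y ⟨le_of_lt hy2.1, hy2.2⟩).1
  have hslope_eq : slope W ξ₀ y = (W y - W ξ₀) / (y - ξ₀) := slope_def_field W ξ₀ y
  rw [hslope_eq] at hy1
  have hyneg : y - ξ₀ < 0 := by linarith [hy2.2]
  have : W y - W ξ₀ < 0 := by
    by_contra h
    push_neg at h
    have := div_nonpos_of_nonneg_of_nonpos h (le_of_lt hyneg)
    linarith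
  linarith
end

section
/- Let c_l > 2, ε > 0, and let ρ, W, Ũ solve on [ε, T) the system ρ' = (c_l-2)ρ/Ũ, W' = (c_l-2)ρ/Ũ² - W/Ũ, (Ũ/ξ)' = W/ξ with Ũ(ε) > 0, W > 0 and ρ > 0 on [ε, T). Then there exist positive constants C₀, C₁, C₂, C₄ such that for all ξ ∈ [ε, T): Ũ(ξ) ≥ C₀ξ, ρ(ξ) ≤ C₂ξ^{C₁}, and W(ξ) ≤ C₄ξ^{C₁}. -/
lemma aux_mono {f f' : ℝ → ℝ} {a b : ℝ} (hab : a ≤ b)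
    (hf : ∀ x ∈ Set.Icc a b, HasDerivAt f (f' x) x)
    (h0 : ∀ x ∈ Set.Icc a b, 0 ≤ f' x) : f a ≤ f b := by
  have cont : ContinuousOn f (Set.Icc a b) := fun x hx =>
    (hf x hx).continuousAt.continuousWithinAt
  have diff : DifferentiableOn ℝ f (interior (Set.Icc a b)) := fun x hx =>
    ((hf x (interior_subset hx)).differentiableAt).differentiableWithinAt
  have h := monotoneOn_of_deriv_nonneg (convex_Icc a b) cont diff (fun x hx => by
    rw [(hf x (interior_subset hx)).deriv]; exact h0 x (interior_subset hx))
  exact h (Set.left_mem_Icc.2 hab) (Set.right_mem_Icc.2 hab) hab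

lemma aux_anti {f f' : ℝ → ℝ} {a b : ℝ} (hab : a ≤ b)
    (hf : ∀ x ∈ Set.Icc a b, HasDerivAt f (f' x) x)
    (h0 : ∀ x ∈ Set.Icc a b, f' x ≤ 0) : f b ≤ f a := by
  have := aux_mono (f := fun x => -f x) (f' := fun x => -f' x) hab
    (fun x hx => (hf x hx).neg) (fun x hx => neg_nonneg.2 (h0 x hx))
  simpa using neg_le_neg_iff.mp this

/-- A priori growth estimates for the extended self-similar profiles:
Ũ grows at least linearly, while ρ and W grow at most polynomially. -/
theorem stmt7 (cl ε T : ℝ) (hcl : 2 < cl) (hε : 0 < ε) (hεT : ε < T)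
    (ρ W Yu : ℝ → ℝ) (ρ' W' : ℝ → ℝ)
    (hρ : ∀ ξ ∈ Set.Ico ε T, HasDerivAt ρ (ρ' ξ) ξ ∧ ρ' ξ = (cl - 2) * ρ ξ / Yu ξ)
    (hW : ∀ ξ ∈ Set.Ico ε T, HasDerivAt W (W' ξ) ξ ∧
      W' ξ = (cl - 2) * ρ ξ / (Yu ξ) ^ 2 - W ξ / Yu ξ)
    (hU : ∀ ξ ∈ Set.Ico ε T, HasDerivAt (fun x => Yu x / x) (W ξ / ξ) ξ)
    (hU0 : 0 < Yu ε)
    (hWpos : ∀ ξ ∈ Set.Ico ε T, 0 < W ξ) (hρpos : ∀ ξ ∈ Set.Ico ε T, 0 < ρ ξ) :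
    ∃ C0 C1 C2 C4 : ℝ, 0 < C0 ∧ 0 < C1 ∧ 0 < C2 ∧ 0 < C4 ∧
      ∀ ξ ∈ Set.Ico ε T, C0 * ξ ≤ Yu ξ ∧ ρ ξ ≤ C2 * ξ ^ C1 ∧ W ξ ≤ C4 * ξ ^ C1 := by
  have hεmem : ε ∈ Set.Ico ε T := ⟨le_refl _, hεT⟩
  set C0 : ℝ := Yu ε / ε with hC0def
  have hC0 : 0 < C0 := div_pos hU0 hε
  set C1 : ℝ := (cl - 2) / C0 with hC1def
  have hcl2 : (0:ℝ) < cl - 2 := by linarith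
  have hC1 : 0 < C1 := div_pos hcl2 hC0
  -- Step 1 : Yu grows at least linearly
  have hsub : ∀ ξ, ξ ∈ Set.Ico ε T → Set.Icc ε ξ ⊆ Set.Ico ε T := by
    intro ξ hξ x hx
    exact ⟨hx.1, lt_of_le_of_lt hx.2 hξ.2⟩
  have hYu : ∀ ξ ∈ Set.Ico ε T, C0 * ξ ≤ Yu ξ := by
    intro ξ hξ
    have h := aux_mono (f := fun x => Yu x / x) (f' := fun x => W x / x) hξ.1
      (fun x hx => hU x (hsub ξ hξ hx))
      (fun x hx => le_of_lt (div_pos (hWpos x (hsub ξ hξ hx))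
        (lt_of_lt_of_le hε hx.1)))
    have hξ0 : 0 < ξ := lt_of_lt_of_le hε hξ.1
    rw [hC0def, div_mul_eq_mul_div, div_le_iff₀ hε]
    have h' := (div_le_div_iff₀ hε hξ0).mp h
    linarith
  have hYupos : ∀ ξ ∈ Set.Ico ε T, 0 < Yu ξ := fun ξ hξ =>
    lt_of_lt_of_le (mul_pos hC0 (lt_of_lt_of_le hε hξ.1)) (hYu ξ hξ)
  -- Step 2 : ρ ≤ C2 ξ^C1
  set C2 : ℝ := ρ ε / ε ^ C1 with hC2def
  have hρε : 0 < ρ ε := hρpos ε hεmem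
  have hC2 : 0 < C2 := div_pos hρε (Real.rpow_pos_of_pos hε _)
  have hρbound : ∀ ξ ∈ Set.Ico ε T, ρ ξ ≤ C2 * ξ ^ C1 := by
    intro ξ hξ
    have hξ0 : 0 < ξ := lt_of_lt_of_le hε hξ.1
    have key := aux_anti (f := fun x => Real.log (ρ x) - C1 * Real.log x)
      (f' := fun x => ρ' x / ρ x - C1 * (1 / x)) hξ.1
      (fun x hx => by
        have hxm := hsub ξ hξ hx
        have hx0 : 0 < x := lt_of_lt_of_le hε hx.1
        exact ((hρ x hxm).1.log (ne_of_gt (hρpos x hxm))).sub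
          (((Real.hasDerivAt_log (ne_of_gt hx0)).const_mul C1).congr_deriv (by ring)))
      (fun x hx => by
        have hxm := hsub ξ hξ hx
        have hx0 : 0 < x := lt_of_lt_of_le hε hx.1
        have hρx := hρpos x hxm
        have hYux := hYupos x hxm
        have hYuge : C0 * x ≤ Yu x := hYu x hxm
        show ρ' x / ρ x - C1 * (1 / x) ≤ 0
        have h1 : ρ' x / ρ x = (cl - 2) / Yu x := by
          rw [(hρ x hxm).2]; field_simp
        rw [h1]
        have h2 : (cl - 2) / Yu x ≤ (cl - 2) / (C0 * x) :=
          div_le_div_of_nonneg_left (le_of_lt hcl2) (mul_pos hC0 hx0) hYuge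
        have h3 : (cl - 2) / (C0 * x) = C1 * (1 / x) := by
          rw [hC1def]; field_simp
        linarith [h2, h3.le, h3.ge])
    -- key : log (ρ ξ) - C1 * log ξ ≤ log (ρ ε) - C1 * log ε
    have hlog : Real.log (ρ ξ) ≤ Real.log (ρ ε) + C1 * Real.log ξ - C1 * Real.log ε := by
      linarith
    have hρξ := hρpos ξ hξ
    have hrw : C2 * ξ ^ C1 =
        Real.exp (Real.log (ρ ε) + C1 * Real.log ξ - C1 * Real.log ε) := by
      rw [Real.exp_sub, Real.exp_add, Real.exp_log hρε, hC2def,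
        Real.rpow_def_of_pos hξ0, Real.rpow_def_of_pos hε]
      ring_nf
    rw [hrw]
    calc ρ ξ = Real.exp (Real.log (ρ ξ)) := (Real.exp_log hρξ).symm
      _ ≤ _ := Real.exp_le_exp.mpr hlog
  -- Step 3 : W bound
  have hWε : 0 < W ε := hWpos ε hεmem
  set C4 : ℝ := W ε / ε ^ C1 + C2 / Yu ε with hC4def
  have hC4 : 0 < C4 := add_pos (div_pos hWε (Real.rpow_pos_of_pos hε _)) (div_pos hC2 hU0)
  refine ⟨C0, C1, C2, C4, hC0, hC1, hC2, hC4, fun ξ hξ => ⟨hYu ξ hξ, hρbound ξ hξ, ?_⟩⟩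
  have hξ0 : 0 < ξ := lt_of_lt_of_le hε hξ.1
  have key := aux_anti (f := fun x => W x - ρ x / Yu ε)
    (f' := fun x => W' x - ρ' x / Yu ε) hξ.1
    (fun x hx => ((hW x (hsub ξ hξ hx)).1).sub (((hρ x (hsub ξ hξ hx)).1).div_const _))
    (fun x hx => by
      have hxm := hsub ξ hξ hx
      have hx0 : 0 < x := lt_of_lt_of_le hε hx.1
      have hρx := hρpos x hxm
      have hWx := hWpos x hxm
      have hYux := hYupos x hxm
      have hYuge : Yu ε ≤ Yu x := by
        have hC0ε : C0 * ε = Yu ε := by rw [hC0def]; field_simp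
        nlinarith [hYu x hxm, mul_le_mul_of_nonneg_left hx.1 hC0.le]
      have hρ'eq := (hρ x hxm).2
      have hρ'pos : 0 ≤ ρ' x := by
        rw [hρ'eq]; positivity
      have hW'eq := (hW x hxm).2
      have hW'le : W' x ≤ ρ' x / Yu x := by
        rw [hW'eq, hρ'eq]
        have : (cl - 2) * ρ x / Yu x ^ 2 = ((cl - 2) * ρ x / Yu x) / Yu x := by
          field_simp
        rw [this]
        have : W x / Yu x > 0 := div_pos hWx hYux
        linarith
      have h2 : ρ' x / Yu x ≤ ρ' x / Yu ε := by
        apply div_le_div_of_nonneg_left hρ'pos hU0 hYuge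
      linarith)
  -- key : W ξ - ρ ξ / Yu ε ≤ W ε - ρ ε / Yu ε
  have h1 : W ξ ≤ W ε + ρ ξ / Yu ε := by
    have : 0 < ρ ε / Yu ε := div_pos hρε hU0
    linarith
  have h2 : ρ ξ / Yu ε ≤ C2 * ξ ^ C1 / Yu ε := by
    gcongr
    exact hρbound ξ hξ
  have hεξ : ε ^ C1 ≤ ξ ^ C1 := Real.rpow_le_rpow (le_of_lt hε) hξ.1 (le_of_lt hC1)
  have h3 : W ε ≤ (W ε / ε ^ C1) * ξ ^ C1 := by
    rw [div_mul_eq_mul_div, le_div_iff₀ (Real.rpow_pos_of_pos hε _)]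
    nlinarith
  have h4 : C2 * ξ ^ C1 / Yu ε = (C2 / Yu ε) * ξ ^ C1 := by ring
  rw [hC4def]
  calc W ξ ≤ W ε + ρ ξ / Yu ε := h1
    _ ≤ (W ε / ε ^ C1) * ξ ^ C1 + C2 * ξ ^ C1 / Yu ε := by linarith
    _ = (W ε / ε ^ C1 + C2 / Yu ε) * ξ ^ C1 := by ring
end

section
/- Let c_l > 2 and suppose Û, Ŵ, ρ̂ : (0, ∞) → ℝ solve ρ̂' = (2/c_l - 1)ρ̂Û/(η(1 + Û/c_l)), Ŵ' = -Ŵ/(η(1 + Û/c_l)) + (1 - 2/c_l)ρ̂/((1 + Û/c_l)²η³), Û' = c_lŴ/η, with Ŵ > 0, ρ̂ > 0, Û increasing, and suppose Û(η) ≤ -2 for all η > 0. Then a contradiction follows; in particular lim_{η→∞} Û(η) > -2 whenever the limit exists. -/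
/-- Monotonicity from a pointwise derivative bound on a right half-line. -/
lemma monoAux (f f' : ℝ → ℝ) (a : ℝ)
    (hf : ∀ x ∈ Set.Ici a, HasDerivAt f (f' x) x)
    (h0 : ∀ x ∈ Set.Ioi a, 0 ≤ f' x) : MonotoneOn f (Set.Ici a) := by
  apply monotoneOn_of_deriv_nonneg (convex_Ici a)
    (fun x hx => (hf x hx).continuousAt.continuousWithinAt)
  · rw [interior_Ici]
    exact fun x hx => ((hf x (Set.mem_Ici.mpr (le_of_lt hx))).differentiableAt).differentiableWithinAt
  · rw [interior_Ici]
    intro x hx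
    rw [(hf x (Set.mem_Ici.mpr (le_of_lt hx))).deriv]
    exact h0 x hx

set_option maxHeartbeats 1000000 in
/-- If the transformed profile Û stayed ≤ -2 everywhere, a contradiction would
follow; hence G(c_l) > -2. -/
theorem stmt8 (cl : ℝ) (hcl : 2 < cl) (Uh Wh ρh Uh' Wh' ρh' : ℝ → ℝ)
    (hden : ∀ η ∈ Set.Ioi (0 : ℝ), 1 + Uh η / cl ≠ 0)
    (hρ : ∀ η ∈ Set.Ioi (0 : ℝ), HasDerivAt ρh (ρh' η) η ∧
      ρh' η = (2 / cl - 1) * ρh η * Uh η / (η * (1 + Uh η / cl)))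
    (hW : ∀ η ∈ Set.Ioi (0 : ℝ), HasDerivAt Wh (Wh' η) η ∧
      Wh' η = -Wh η / (η * (1 + Uh η / cl)) +
        (1 - 2 / cl) * ρh η / ((1 + Uh η / cl) ^ 2 * η ^ 3))
    (hU : ∀ η ∈ Set.Ioi (0 : ℝ), HasDerivAt Uh (Uh' η) η ∧ Uh' η = cl * Wh η / η)
    (hWpos : ∀ η ∈ Set.Ioi (0 : ℝ), 0 < Wh η)
    (hρpos : ∀ η ∈ Set.Ioi (0 : ℝ), 0 < ρh η)
    (hmono : MonotoneOn Uh (Set.Ioi (0 : ℝ)))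
    (hUle : ∀ η ∈ Set.Ioi (0 : ℝ), Uh η ≤ -2) :
    False := by
  have hcl0 : (0:ℝ) < cl := by linarith
  have h1mem : (1:ℝ) ∈ Set.Ioi (0:ℝ) := by norm_num
  have hfrac : (0:ℝ) < 1 - 2 / cl := by
    have : 2 / cl < 1 := (div_lt_one hcl0).mpr hcl
    linarith
  -- Endgame: if Wh is bounded below by δ > 0 on [a, ∞), contradiction.
  have endgame : ∀ a : ℝ, 1 ≤ a → ∀ δ : ℝ, 0 < δ →
      (∀ η, a ≤ η → δ ≤ Wh η) → False := by
    intro a ha δ hδ hWδ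
    have ha0 : (0:ℝ) < a := lt_of_lt_of_le one_pos ha
    have hG : ∀ x ∈ Set.Ici a,
        HasDerivAt (fun η => Uh η - cl * δ * Real.log η) (Uh' x - cl * δ * x⁻¹) x := by
      intro x hx
      have hx0 : 0 < x := lt_of_lt_of_le ha0 hx
      exact ((hU x hx0).1).sub ((Real.hasDerivAt_log hx0.ne').const_mul (cl * δ))
    have hGmono : MonotoneOn (fun η => Uh η - cl * δ * Real.log η) (Set.Ici a) := by
      apply monoAux _ _ a hG
      intro x hx
      have hx0 : 0 < x := lt_trans ha0 hx
      have hWx : δ ≤ Wh x := hWδ x (le_of_lt hx)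
      have hUeq := (hU x hx0).2
      rw [hUeq]
      rw [sub_nonneg, mul_comm (cl * δ) x⁻¹, ← div_eq_inv_mul]
      apply div_le_div_of_nonneg_right _ hx0.le
      · nlinarith
    set b := a * Real.exp ((-1 - Uh a) / (cl * δ)) with hb
    have haU : Uh a ≤ -2 := hUle a ha0
    have ht0 : 0 ≤ (-1 - Uh a) / (cl * δ) := by
      apply div_nonneg (by linarith) (by positivity)
    have hab : a ≤ b := by
      rw [hb]
      nlinarith [Real.one_le_exp ht0]
    have hb0 : 0 < b := lt_of_lt_of_le ha0 hab
    have hkey := hGmono (Set.self_mem_Ici) (Set.mem_Ici.mpr hab) hab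
    simp only at hkey
    have hlogb : Real.log b = Real.log a + (-1 - Uh a) / (cl * δ) := by
      rw [hb, Real.log_mul ha0.ne' (Real.exp_ne_zero _), Real.log_exp]
    have hcd : cl * δ ≠ 0 := by positivity
    have hmul : cl * δ * ((-1 - Uh a) / (cl * δ)) = -1 - Uh a := by
      field_simp
    have hUb : Uh b ≤ -2 := hUle b hb0
    rw [hlogb] at hkey
    nlinarith [hkey]
  -- continuity of the denominator
  have hscont : ContinuousOn (fun η => 1 + Uh η / cl) (Set.Ioi (0:ℝ)) := by
    intro x hx
    exact (continuousWithinAt_const).add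
      (((hU x hx).1.continuousAt.continuousWithinAt).div_const cl)
  -- sign coherence via IVT
  have hsame : ∀ p q : ℝ, p ∈ Set.Ioi (0:ℝ) → q ∈ Set.Ioi (0:ℝ) →
      1 + Uh p / cl < 0 → 0 < 1 + Uh q / cl → False := by
    intro p q hp hq hnp hpq
    have hsub : Set.uIcc p q ⊆ Set.Ioi (0:ℝ) := by
      intro x hx
      have h1 : min p q ≤ x := hx.1
      have h2 : 0 < min p q := lt_min hp hq
      exact lt_of_lt_of_le h2 h1
    have hmem : (0:ℝ) ∈ Set.uIcc (1 + Uh p / cl) (1 + Uh q / cl) :=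
      Set.mem_uIcc.mpr (Or.inl ⟨hnp.le, hpq.le⟩)
    obtain ⟨x, hx, hx0⟩ := intermediate_value_uIcc (hscont.mono hsub) hmem
    exact hden x (hsub hx) hx0
  rcases (hden 1 h1mem).lt_or_gt with hneg | hpos
  · -- Case s < 0 everywhere
    have hsneg : ∀ η ∈ Set.Ioi (0:ℝ), 1 + Uh η / cl < 0 := by
      intro η hη
      rcases (hden η hη).lt_or_gt with h | h
      · exact h
      · exact absurd (hsame 1 η h1mem hη hneg h) not_false
    -- W' > 0 everywhere
    have hW'pos : ∀ x ∈ Set.Ioi (0:ℝ), 0 ≤ Wh' x := by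
      intro x hx
      have hx0 : (0:ℝ) < x := hx
      have hs := hsneg x hx
      have hWx := hWpos x hx
      have hρx := hρpos x hx
      rw [(hW x hx).2]
      have ht1 : 0 < -Wh x / (x * (1 + Uh x / cl)) := by
        apply div_pos_of_neg_of_neg (by linarith)
        exact mul_neg_of_pos_of_neg hx0 hs
      have ht2 : 0 < (1 - 2 / cl) * ρh x / ((1 + Uh x / cl) ^ 2 * x ^ 3) := by
        apply div_pos (by positivity)
        apply mul_pos _ (by positivity)
        have : (1 + Uh x / cl) ^ 2 = (1 + Uh x / cl) * (1 + Uh x / cl) := sq _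
        rw [this]
        exact mul_pos_of_neg_of_neg hs hs
      linarith
    have hWmono : MonotoneOn Wh (Set.Ici (1:ℝ)) := by
      apply monoAux Wh Wh' 1 (fun x hx => (hW x (Set.mem_Ioi.mpr (lt_of_lt_of_le one_pos hx))).1)
      exact fun x hx => hW'pos x (Set.mem_Ioi.mpr (lt_trans one_pos hx))
    exact endgame 1 le_rfl (Wh 1) (hWpos 1 h1mem)
      (fun η hη => hWmono Set.self_mem_Ici hη hη)
  · -- Case s > 0 everywhere
    have hspos : ∀ η ∈ Set.Ioi (0:ℝ), 0 < 1 + Uh η / cl := by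
      intro η hη
      rcases (hden η hη).lt_or_gt with h | h
      · exact absurd (hsame η 1 hη h1mem h hpos) not_false
      · exact h
    have hsle : ∀ η ∈ Set.Ioi (0:ℝ), 1 + Uh η / cl ≤ 1 - 2 / cl := by
      intro η hη
      have h2 : Uh η / cl ≤ (-2) / cl := by
        apply div_le_div_of_nonneg_right (hUle η hη) hcl0.le
      have h3 : (-2:ℝ) / cl = -(2 / cl) := neg_div cl 2
      linarith
    set s₀ : ℝ := 1 + Uh 1 / cl with hs₀def
    have hs₀ : 0 < s₀ := hpos
    have hsge : ∀ η : ℝ, 1 ≤ η → s₀ ≤ 1 + Uh η / cl := by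
      intro η hη
      have hηm : η ∈ Set.Ioi (0:ℝ) := lt_of_lt_of_le one_pos hη
      have := hmono h1mem hηm hη
      have h2 : Uh 1 / cl ≤ Uh η / cl := div_le_div_of_nonneg_right this hcl0.le
      rw [hs₀def]; linarith
    -- lower bound on ρ : ρ η ≥ ρ 1 * η² for η ≥ 1
    have hgmono : MonotoneOn (fun η => ρh η / η ^ 2) (Set.Ici (1:ℝ)) := by
      apply monoAux _ (fun x => (ρh' x * x ^ 2 - ρh x * (2 * x ^ 1)) / (x ^ 2) ^ 2) 1
      · intro x hx
        have hx0 : (0:ℝ) < x := lt_of_lt_of_le one_pos hx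
        exact ((hρ x hx0).1).div (hasDerivAt_pow 2 x) (by positivity)
      · intro x hx
        have hx1 : (1:ℝ) < x := hx
        have hx0 : (0:ℝ) < x := lt_trans one_pos hx1
        have hxm : x ∈ Set.Ioi (0:ℝ) := hx0
        have hsx : 0 < 1 + Uh x / cl := hspos x hxm
        have hsxle : 1 + Uh x / cl ≤ 1 - 2 / cl := hsle x hxm
        have hUx : Uh x ≤ -2 := hUle x hxm
        have hρx : 0 < ρh x := hρpos x hxm
        apply div_nonneg _ (by positivity)
        have hkey : 2 * ρh x / x ≤ ρh' x := by
          rw [(hρ x hxm).2]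
          rw [div_le_div_iff₀ hx0 (by positivity)]
          nlinarith [mul_nonneg (mul_nonneg hρx.le hx0.le)
            (by nlinarith : (0:ℝ) ≤ (2 / cl - 1) * Uh x - 2 * (1 + Uh x / cl))]
        have e1 : 2 * ρh x / x * x ^ 2 = ρh x * (2 * x ^ 1) := by
          field_simp
        nlinarith [mul_le_mul_of_nonneg_right hkey (sq_nonneg x)]
    have hρlb : ∀ η : ℝ, 1 ≤ η → ρh 1 * η ^ 2 ≤ ρh η := by
      intro η hη
      have hη0 : (0:ℝ) < η := lt_of_lt_of_le one_pos hη
      have := hgmono Set.self_mem_Ici (Set.mem_Ici.mpr hη) hη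
      simp only [one_pow, div_one] at this
      exact (le_div_iff₀ (by positivity : (0:ℝ) < η ^ 2)).mp this
    set ρ₁ : ℝ := ρh 1 with hρ₁def
    have hρ₁ : 0 < ρ₁ := hρpos 1 h1mem
    set c : ℝ := ρ₁ / (1 - 2 / cl) with hcdef
    have hc : 0 < c := by positivity
    -- Monotonicity of F = Wh + Uh/(cl s₀) - c log
    have hFmono : MonotoneOn
        (fun η => Wh η + Uh η / (cl * s₀) - c * Real.log η) (Set.Ici (1:ℝ)) := by
      apply monoAux _ (fun x => Wh' x + Uh' x / (cl * s₀) - c * x⁻¹) 1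
      · intro x hx
        have hx0 : (0:ℝ) < x := lt_of_lt_of_le one_pos hx
        exact (((hW x hx0).1).add (((hU x hx0).1).div_const (cl * s₀))).sub
          ((Real.hasDerivAt_log hx0.ne').const_mul c)
      · intro x hx
        have hx1 : (1:ℝ) < x := hx
        have hx0 : (0:ℝ) < x := lt_trans one_pos hx1
        have hxm : x ∈ Set.Ioi (0:ℝ) := hx0
        have hsx : 0 < 1 + Uh x / cl := hspos x hxm
        have hsxle : 1 + Uh x / cl ≤ 1 - 2 / cl := hsle x hxm
        have hsxge : s₀ ≤ 1 + Uh x / cl := hsge x hx1.le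
        have hWx : 0 < Wh x := hWpos x hxm
        have hρx : ρ₁ * x ^ 2 ≤ ρh x := hρlb x hx1.le
        have hρxpos : 0 < ρh x := hρpos x hxm
        -- rewrite the U-term
        have hclne : cl ≠ 0 := hcl0.ne'
        have hs₀ne : s₀ ≠ 0 := hs₀.ne'
        have hxne : x ≠ 0 := hx0.ne'
        have hUterm : Uh' x / (cl * s₀) = Wh x / (x * s₀) := by
          rw [(hU x hxm).2]
          field_simp
        rw [(hW x hxm).2, hUterm]
        have ht1 : Wh x / (x * (1 + Uh x / cl)) ≤ Wh x / (x * s₀) := by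
          apply div_le_div_of_nonneg_left hWx.le (by positivity)
          nlinarith
        have ht2 : c * x⁻¹ ≤ (1 - 2 / cl) * ρh x / ((1 + Uh x / cl) ^ 2 * x ^ 3) := by
          have hsq : (1 + Uh x / cl) ^ 2 ≤ (1 - 2 / cl) ^ 2 :=
            pow_le_pow_left₀ hsx.le hsxle 2
          have step1 : (1 - 2 / cl) * (ρ₁ * x ^ 2) / ((1 - 2 / cl) ^ 2 * x ^ 3) ≤
              (1 - 2 / cl) * ρh x / ((1 + Uh x / cl) ^ 2 * x ^ 3) := by
            apply div_le_div₀ (by positivity)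
            · nlinarith
            · positivity
            · nlinarith [pow_pos hx0 3]
          have step0 : c * x⁻¹ =
              (1 - 2 / cl) * (ρ₁ * x ^ 2) / ((1 - 2 / cl) ^ 2 * x ^ 3) := by
            have hfne : (1 - 2 / cl) ≠ 0 := hfrac.ne'
            have hfne2 : cl - 2 ≠ 0 := by linarith
            rw [hcdef]
            field_simp
          rw [step0]
          exact step1
        have hnd : -Wh x / (x * (1 + Uh x / cl)) =
            -(Wh x / (x * (1 + Uh x / cl))) := neg_div _ _
        rw [hnd]
        linarith
    -- Wh grows at least logarithmically
    set F₁ : ℝ := Wh 1 + Uh 1 / (cl * s₀) with hF₁def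
    have hWlb : ∀ η : ℝ, 1 ≤ η → F₁ + c * Real.log η ≤ Wh η := by
      intro η hη
      have hη0 : (0:ℝ) < η := lt_of_lt_of_le one_pos hη
      have hkey := hFmono Set.self_mem_Ici (Set.mem_Ici.mpr hη) hη
      simp only [Real.log_one, mul_zero, sub_zero] at hkey
      have hUneg : Uh η / (cl * s₀) ≤ 0 := by
        apply div_nonpos_of_nonpos_of_nonneg (by linarith [hUle η hη0]) (by positivity)
      rw [hF₁def]
      linarith
    -- pick a beyond which Wh ≥ 1
    set a : ℝ := max 1 (Real.exp ((1 - F₁) / c)) with hadef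
    apply endgame a (le_max_left _ _) 1 one_pos
    intro η hη
    have hη1 : (1:ℝ) ≤ η := le_trans (le_max_left _ _) hη
    have hη0 : (0:ℝ) < η := lt_of_lt_of_le one_pos hη1
    have hexp : Real.exp ((1 - F₁) / c) ≤ η := le_trans (le_max_right _ _) hη
    have hlog : (1 - F₁) / c ≤ Real.log η := (Real.le_log_iff_exp_le hη0).mpr hexp
    have hmul : 1 - F₁ ≤ c * Real.log η := by
      rw [← div_le_iff₀' hc]
      exact hlog
    have := hWlb η hη1
    linarith
end

section
/- Let c_l > 2, s ≥ 2, h > 0, η₀ > 0, and suppose ρ̃, W̃, Ũ solve on [η₀, η₀+h] the system ρ̃' = ((-3 - c_l)ρ̃Ũ - 5c_lρ̃)/((c_l + Ũ)η), W̃' = (-2c_lW̃ - ŨW̃)/((c_l + Ũ)η) + c_l(c_l - 2)ρ̃η/(c_l + Ũ)², Ũ' = c_lW̃, with ρ̃ > 0, W̃ > 0, Ũ nondecreasing, and c_l + Ũ > 0 and the a priori bound Ũ ≥ ((1-s)c_l - 2)/s so that (2/c_l - 1)Ũ/(1 + Ũ/c_l) ≤ s c_l - c_l pointwise. Then for η ∈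 [η₀, η₀+h]: ρ̃(η) ≤ ρ̃(η₀)·η₀^{c_l - sc_l}·(η₀+h)^{sc_l - c_l} and ρ̃(η) ≥ ρ̃(η₀)·η₀^{3+c_l}·(η₀+h)^{-3-c_l}. -/
lemma mono_aux {ρ ρ' : ℝ → ℝ} {x0 h a : ℝ} (hx0 : 0 < x0) (hh : 0 < h)
    (hd : ∀ x ∈ Set.Icc x0 (x0 + h), HasDerivAt ρ (ρ' x) x)
    (hsign : ∀ x ∈ Set.Icc x0 (x0 + h), 0 ≤ ρ' x * x + a * ρ x) :
    MonotoneOn (fun x => ρ x * x ^ a) (Set.Icc x0 (x0 + h)) := by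
  have hF : ∀ x ∈ Set.Icc x0 (x0 + h),
      HasDerivAt (fun x => ρ x * x ^ a) (ρ' x * x ^ a + ρ x * (a * x ^ (a - 1))) x := by
    intro x hx
    have hxpos : 0 < x := lt_of_lt_of_le hx0 hx.1
    exact (hd x hx).mul (Real.hasDerivAt_rpow_const (Or.inl hxpos.ne'))
  apply monotoneOn_of_deriv_nonneg (convex_Icc _ _)
  · exact fun x hx => (hF x hx).continuousAt.continuousWithinAt
  · intro x hx
    rw [interior_Icc] at hx
    exact (hF x (Set.Ioo_subset_Icc_self hx)).differentiableAt.differentiableWithinAt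
  · intro x hx
    rw [interior_Icc] at hx
    have hx' := Set.Ioo_subset_Icc_self hx
    have hxpos : 0 < x := lt_of_lt_of_le hx0 hx'.1
    rw [(hF x hx').deriv]
    have e : ρ' x * x ^ a + ρ x * (a * x ^ (a - 1)) = x ^ (a - 1) * (ρ' x * x + a * ρ x) := by
      have : x ^ a = x ^ (a - 1) * x := by
        rw [← Real.rpow_add_one hxpos.ne']; ring_nf
      rw [this]; ring
    rw [e]
    exact mul_nonneg (Real.rpow_nonneg hxpos.le _) (hsign x hx')

/-- A priori bounds for ρ̃ on a single time step [η₀, η₀+h] of the rescaled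
self-similar ODE system. -/
theorem stmt13 (cl : ℝ) (s : ℕ) (η₀ h : ℝ) (hcl : 2 < cl) (hs : 2 ≤ s)
    (hη₀ : 0 < η₀) (hh : 0 < h)
    (ρt Wt Ut ρt' Wt' Ut' : ℝ → ℝ)
    (hden : ∀ η ∈ Set.Icc η₀ (η₀ + h), 0 < cl + Ut η)
    (hρ : ∀ η ∈ Set.Icc η₀ (η₀ + h), HasDerivAt ρt (ρt' η) η ∧
      ρt' η = ((-3 - cl) * ρt η * Ut η - 5 * cl * ρt η) / ((cl + Ut η) * η))
    (hW : ∀ η ∈ Set.Icc η₀ (η₀ + h), HasDerivAt Wt (Wt' η) η ∧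
      Wt' η = (-2 * cl * Wt η - Ut η * Wt η) / ((cl + Ut η) * η) +
        cl * (cl - 2) * ρt η * η / (cl + Ut η) ^ 2)
    (hU : ∀ η ∈ Set.Icc η₀ (η₀ + h), HasDerivAt Ut (Ut' η) η ∧ Ut' η = cl * Wt η)
    (hρpos : ∀ η ∈ Set.Icc η₀ (η₀ + h), 0 < ρt η)
    (hWpos : ∀ η ∈ Set.Icc η₀ (η₀ + h), 0 < Wt η)
    (hmono : MonotoneOn Ut (Set.Icc η₀ (η₀ + h)))
    (hUlb : ∀ η ∈ Set.Icc η₀ (η₀ + h), ((1 - (s : ℝ)) * cl - 2) / s ≤ Ut η)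
    (hptw : ∀ η ∈ Set.Icc η₀ (η₀ + h),
      (2 / cl - 1) * Ut η / (1 + Ut η / cl) ≤ (s : ℝ) * cl - cl) :
    ∀ η ∈ Set.Icc η₀ (η₀ + h),
      ρt η ≤ ρt η₀ * η₀ ^ (cl - s * cl) * (η₀ + h) ^ ((s : ℝ) * cl - cl) ∧
      ρt η₀ * η₀ ^ (3 + cl) * (η₀ + h) ^ (-3 - cl) ≤ ρt η := by
  have hclpos : (0:ℝ) < cl := by linarith
  have hs2 : (2:ℝ) ≤ (s:ℝ) := by exact_mod_cast hs
  intro η hη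
  have hηpos : 0 < η := lt_of_lt_of_le hη₀ hη.1
  have hη0mem : η₀ ∈ Set.Icc η₀ (η₀ + h) := by constructor <;> linarith
  have hρ0 := hρpos η₀ hη0mem
  -- lower bound: G = ρ * x^(3+cl) is monotone
  have hmonoG : MonotoneOn (fun x => ρt x * x ^ (3 + cl)) (Set.Icc η₀ (η₀ + h)) := by
    apply mono_aux hη₀ hh (fun x hx => (hρ x hx).1)
    intro x hx
    have hxpos : 0 < x := lt_of_lt_of_le hη₀ hx.1
    have hD := hden x hx
    have hP := hρpos x hx
    have e : ρt' x * x + (3 + cl) * ρt x = ρt x * cl * (cl - 2) / (cl + Ut x) := by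
      rw [(hρ x hx).2]
      field_simp
      ring
    rw [e]
    exact div_nonneg (mul_pos (mul_pos hP hclpos) (show (0:ℝ) < cl - 2 by linarith)).le hD.le
  -- upper bound: -ρ * x^(cl - s*cl) is monotone
  have hmonoF : MonotoneOn (fun x => (-ρt x) * x ^ (cl - (s:ℝ) * cl)) (Set.Icc η₀ (η₀ + h)) := by
    apply mono_aux hη₀ hh (fun x hx => ((hρ x hx).1).neg)
    intro x hx
    have hxpos : 0 < x := lt_of_lt_of_le hη₀ hx.1
    have hD := hden x hx
    have hP := hρpos x hx
    have hp := hptw x hx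
    have e1 : (2 / cl - 1) * Ut x / (1 + Ut x / cl) = (2 - cl) * Ut x / (cl + Ut x) := by
      have hD2 : 0 < 1 + Ut x / cl := by
        have : 1 + Ut x / cl = (cl + Ut x) / cl := by field_simp
        rw [this]; positivity
      rw [div_eq_div_iff hD2.ne' hD.ne']
      field_simp
    rw [e1] at hp
    have key : -ρt' x * x + (cl - (s:ℝ) * cl) * (-ρt x)
        = -(ρt x * ((2 - cl) * Ut x / (cl + Ut x)) + (cl - (s:ℝ) * cl) * ρt x - 5 * ρt x) := by
      rw [(hρ x hx).2]
      field_simp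
      ring
    have h2 : ρt x * ((2 - cl) * Ut x / (cl + Ut x)) ≤ ρt x * ((s:ℝ) * cl - cl) :=
      mul_le_mul_of_nonneg_left hp hP.le
    rw [Pi.neg_apply, key]
    nlinarith
  constructor
  · -- upper bound
    have hF := hmonoF hη0mem hη hη.1
    simp only at hF
    have hηa : (0:ℝ) < η ^ (cl - (s:ℝ) * cl) := Real.rpow_pos_of_pos hηpos _
    have h1 : ρt η ≤ ρt η₀ * η₀ ^ (cl - (s:ℝ) * cl) / η ^ (cl - (s:ℝ) * cl) := by
      rw [le_div_iff₀ hηa]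
      nlinarith
    have h2 : ρt η₀ * η₀ ^ (cl - (s:ℝ) * cl) / η ^ (cl - (s:ℝ) * cl)
        = ρt η₀ * η₀ ^ (cl - (s:ℝ) * cl) * η ^ ((s:ℝ) * cl - cl) := by
      rw [div_eq_mul_inv, ← Real.rpow_neg hηpos.le]
      ring_nf
    have hexp : (0:ℝ) ≤ (s:ℝ) * cl - cl := by nlinarith
    have h3 : η ^ ((s:ℝ) * cl - cl) ≤ (η₀ + h) ^ ((s:ℝ) * cl - cl) :=
      Real.rpow_le_rpow hηpos.le hη.2 hexp
    calc ρt η ≤ ρt η₀ * η₀ ^ (cl - (s:ℝ) * cl) * η ^ ((s:ℝ) * cl - cl) := by rw [← h2]; exact h1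
      _ ≤ ρt η₀ * η₀ ^ (cl - (s:ℝ) * cl) * (η₀ + h) ^ ((s:ℝ) * cl - cl) := by
          apply mul_le_mul_of_nonneg_left h3
          positivity
  · -- lower bound
    have hG := hmonoG hη0mem hη hη.1
    simp only at hG
    have hb : (0:ℝ) ≤ 3 + cl := by linarith
    have hbase : (0:ℝ) < (η₀ + h) ^ (3 + cl) := Real.rpow_pos_of_pos (by linarith) _
    have e : ρt η₀ * η₀ ^ (3 + cl) * (η₀ + h) ^ (-3 - cl)
        = ρt η₀ * η₀ ^ (3 + cl) / (η₀ + h) ^ (3 + cl) := by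
      rw [show (-3 - cl) = -(3 + cl) by ring, Real.rpow_neg (by linarith), div_eq_mul_inv]
    rw [e, div_le_iff₀ hbase]
    have h4 : η ^ (3 + cl) ≤ (η₀ + h) ^ (3 + cl) :=
      Real.rpow_le_rpow hηpos.le hη.2 hb
    have hPη := hρpos η hη
    calc ρt η₀ * η₀ ^ (3 + cl) ≤ ρt η * η ^ (3 + cl) := hG
      _ ≤ ρt η * (η₀ + h) ^ (3 + cl) := mul_le_mul_of_nonneg_left h4 hPη.le
end
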